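/- arXiv:1008.4911 — 2 statements merged into one kernel-verified Lean document; each statement's English description precedes it below -/
import Mathlib

section
/- Derivative formulas for Cayley-trigonometric functions on hℤ: with Cos, Sin as defined, (Cos(n+1) - Cos(n))/h = -ω·(Sin(n) + Sin(n+1))/2 and (Sin(n+1) - Sin(n))/h = ω·(Cos(n) + Cos(n+1))/2. -/
open Complex in
theorem cayley_trig_derivatives (h : ℝ) (hh : 0 < h) (ω : ℝ)
    (E : ℤ → ℂ) (E' : ℤ → ℂ)
    (hE : ∀ n : ℤ, E n = ((1 + I * h * ω / 2) / (1 - I * h * ω / 2)) ^ n)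
    (hE' : ∀ n : ℤ, E' n = ((1 - I * h * ω / 2) / (1 + I * h * ω / 2)) ^ n)
    (Cos Sin : ℤ → ℂ)
    (hCos : ∀ n : ℤ, Cos n = (E n + E' n) / 2)
    (hSin : ∀ n : ℤ, Sin n = (E n - E' n) / (2 * I)) (n : ℤ) :
    (Cos (n + 1) - Cos n) / h = -ω * (Sin n + Sin (n + 1)) / 2 ∧
      (Sin (n + 1) - Sin n) / h = ω * (Cos n + Cos (n + 1)) / 2 := by
  have ha : (1 + I * h * ω / 2 : ℂ) ≠ 0 := by
    intro hc
    have := congrArg Complex.re hc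
    simp at this
  have hb : (1 - I * h * ω / 2 : ℂ) ≠ 0 := by
    intro hc
    have := congrArg Complex.re hc
    simp at this
  have hh' : (h:ℂ) ≠ 0 := by exact_mod_cast hh.ne'
  have hc : (2 - I * h * ω : ℂ) ≠ 0 := by
    intro hc
    have := congrArg Complex.re hc
    simp at this
  have hd : (2 + I * h * ω : ℂ) ≠ 0 := by
    intro hc
    have := congrArg Complex.re hc
    simp at this
  have hE1 : E (n+1) = E n * ((1 + I * h * ω / 2) / (1 - I * h * ω / 2)) := by
    rw [hE, hE, zpow_add_one₀ (div_ne_zero ha hb)]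
  have hE1' : E' (n+1) = E' n * ((1 - I * h * ω / 2) / (1 + I * h * ω / 2)) := by
    rw [hE', hE', zpow_add_one₀ (div_ne_zero hb ha)]
  constructor
  · rw [hCos, hCos, hSin, hSin, hE1, hE1']
    field_simp [hc, hd]
    have h2I : (2 * I : ℂ) ≠ 0 := mul_ne_zero two_ne_zero Complex.I_ne_zero
    linear_combination (4 * (h:ℂ) * (ω:ℂ) * (E n * (2 + I * h * ω) - E' n * (2 - I * h * ω))) * Complex.I_sq
  · rw [hSin, hSin, hCos, hCos, hE1, hE1']
    field_simp [hc, hd]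
    have h2I : (2 * I : ℂ) ≠ 0 := mul_ne_zero two_ne_zero Complex.I_ne_zero
    ring
end

section
/- The Cayley-discretized harmonic oscillator has bounded solutions: for h > 0, ω₀ ∈ ℝ, any sequence q : ℤ → ℝ satisfying (q(n+2) - 2q(n+1) + q(n))/h² + ω₀²·(q(n+2) + 2q(n+1) + q(n))/4 = 0 is bounded. -/
theorem cayley_oscillator_bounded (h : ℝ) (hh : 0 < h) (ω₀ : ℝ) (hω : ω₀ ≠ 0)
    (q : ℤ → ℝ)
    (hq : ∀ n : ℤ, (q (n + 2) - 2 * q (n + 1) + q n) / h ^ 2 +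
      ω₀ ^ 2 * (q (n + 2) + 2 * q (n + 1) + q n) / 4 = 0) :
    ∃ M : ℝ, ∀ n : ℤ, |q n| ≤ M := by
  have hh2 : (0:ℝ) < h ^ 2 := by positivity
  have hω2 : (0:ℝ) < ω₀ ^ 2 := by positivity
  have hapos : (0:ℝ) < 1 / h ^ 2 + ω₀ ^ 2 / 4 := by positivity
  set c : ℝ := (2 / h ^ 2 - ω₀ ^ 2 / 2) / (1 / h ^ 2 + ω₀ ^ 2 / 4) with hc
  have hac : (1 / h ^ 2 + ω₀ ^ 2 / 4) * c = 2 / h ^ 2 - ω₀ ^ 2 / 2 := by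
    rw [hc]; field_simp
  have hrec : ∀ n : ℤ, q (n + 2) = c * q (n + 1) - q n := by
    intro n
    have key : (1 / h ^ 2 + ω₀ ^ 2 / 4) * q (n + 2) =
        (1 / h ^ 2 + ω₀ ^ 2 / 4) * (c * q (n + 1) - q n) := by
      linear_combination hq n - q (n + 1) * hac
    exact mul_left_cancel₀ (ne_of_gt hapos) key
  have hclt : |c| < 2 := by
    rw [hc, abs_div, abs_of_pos hapos, div_lt_iff₀ hapos]
    rw [abs_lt]
    have h1p : (0:ℝ) < 1 / h ^ 2 := by positivity
    have h2p : (2:ℝ) / h ^ 2 = 2 * (1 / h ^ 2) := by ring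
    rw [h2p]
    constructor <;> linarith
  set E : ℤ → ℝ := fun n => q (n + 1) ^ 2 + q n ^ 2 - c * q (n + 1) * q n with hE
  have hstep : ∀ n : ℤ, E (n + 1) = E n := by
    intro n
    have h2 := hrec n
    simp only [hE]
    have : n + 1 + 1 = n + 2 := by ring
    rw [this, h2]
    ring
  have hconst : ∀ n : ℤ, E n = E 0 := by
    intro n
    induction n using Int.induction_on with
    | zero => rfl
    | succ k ih => rw [hstep k, ih]
    | pred k ih => rw [← ih, ← hstep (-k - 1)]; norm_num
  have hd : (0:ℝ) < 1 - |c| / 2 := by linarith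
  have hbound : ∀ n : ℤ, (1 - |c| / 2) * q n ^ 2 ≤ E 0 := by
    intro n
    rw [← hconst n]
    simp only [hE]
    have h1 : c * q (n + 1) * q n ≤ |c| * (|q (n + 1)| * |q n|) := by
      calc c * q (n + 1) * q n ≤ |c * q (n + 1) * q n| := le_abs_self _
        _ = |c| * (|q (n + 1)| * |q n|) := by rw [abs_mul, abs_mul]; ring
    nlinarith [sq_nonneg (|q (n + 1)| - |q n|), sq_abs (q (n + 1)), sq_abs (q n),
      abs_nonneg c, abs_nonneg (q n), abs_nonneg (q (n + 1)), sq_nonneg (q (n+1))]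
  refine ⟨Real.sqrt (E 0 / (1 - |c| / 2)), fun n => ?_⟩
  apply Real.abs_le_sqrt
  rw [le_div_iff₀ hd]
  linarith [hbound n]
end
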